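/- Let V be a real inner product space and A : V → V a symmetric linear map (⟪A v, w⟫ = ⟪v, A w⟫) with ⟪A v, v⟫ ≥ 0 for all v, w ∈ V. Then for every k > 0 and g ∈ V, if W₁, W₂ ∈ V both satisfy W + k(1 + ⟪A W, W⟫) · A W = g, then W₁ = W₂. -/

import Mathlib

/-- Uniqueness part of Theorem 5.2 for the backward Euler scheme, via the
monotonicity property of Lemma 2.6. -/
theorem backward_euler_uniqueness
    {V : Type*} [NormedAddCommGroup V] [InnerProductSpace ℝ V]
    (A : V →ₗ[ℝ] V)
    (hsymm : ∀ v w : V, (inner ℝ (A v) w : ℝ) = inner ℝ v (A w))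
    (hpos : ∀ v : V, (0 : ℝ) ≤ inner ℝ (A v) v)
    (k : ℝ) (hk : 0 < k) (g : V)
    (W₁ W₂ : V)
    (h₁ : W₁ + (k * (1 + (inner ℝ (A W₁) W₁ : ℝ))) • A W₁ = g)
    (h₂ : W₂ + (k * (1 + (inner ℝ (A W₂) W₂ : ℝ))) • A W₂ = g) :
    W₁ = W₂ := by
  have eq : W₁ + (k * (1 + (inner ℝ (A W₁) W₁ : ℝ))) • A W₁
      = W₂ + (k * (1 + (inner ℝ (A W₂) W₂ : ℝ))) • A W₂ := h₁.trans h₂.symm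
  set a : ℝ := inner ℝ (A W₁) W₁ with ha_def
  set c : ℝ := inner ℝ (A W₂) W₂ with hc_def
  set b : ℝ := inner ℝ (A W₁) W₂ with hb_def
  have hb : (inner ℝ (A W₂) W₁ : ℝ) = b := by
    rw [hb_def, hsymm, real_inner_comm]
  have ha := hpos W₁
  have hc := hpos W₂
  have hd : (0:ℝ) ≤ inner ℝ (A (W₁ - W₂)) (W₁ - W₂) := hpos _
  have hd' : (inner ℝ (A (W₁ - W₂)) (W₁ - W₂) : ℝ) = a - 2*b + c := by
    simp only [map_sub, inner_sub_left, inner_sub_right, ← ha_def, ← hc_def, ← hb_def, hb]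
    ring
  rw [hd'] at hd
  have key : (inner ℝ (W₁ + (k * (1 + a)) • A W₁) (W₁ - W₂) : ℝ)
      = inner ℝ (W₂ + (k * (1 + c)) • A W₂) (W₁ - W₂) := by rw [eq]
  simp only [inner_add_left, real_inner_smul_left, inner_sub_right, ← ha_def, ← hc_def,
    ← hb_def, hb] at key
  have hsym12 : (inner ℝ W₂ W₁ : ℝ) = inner ℝ W₁ W₂ := real_inner_comm _ _
  have hdd : (inner ℝ (W₁ - W₂) (W₁ - W₂) : ℝ)
      = (inner ℝ W₁ W₁ : ℝ) - 2 * (inner ℝ W₁ W₂ : ℝ) + (inner ℝ W₂ W₂ : ℝ) := by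
    simp only [inner_sub_left, inner_sub_right, hsym12]
    ring
  have hzero : (inner ℝ (W₁ - W₂) (W₁ - W₂) : ℝ) ≤ 0 := by
    rw [hdd]
    nlinarith [mul_nonneg (add_nonneg ha hc) hd, sq_nonneg (a - c), hsym12]
  have : (inner ℝ (W₁ - W₂) (W₁ - W₂) : ℝ) = 0 :=
    le_antisymm hzero real_inner_self_nonneg
  have := inner_self_eq_zero.mp this
  exact sub_eq_zero.mp this
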